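/- Let C be a phylogenetic set of cuts of N and c = (A|B) ∈ C. Define the cut graph G_{C,c} whose vertex set is the union of all clusters of C and singletons of N that are subsets of A, together with all clusters of C and singletons of N that are subsets of B, with edges given by the Hasse diagrams of these two inclusion posets plus an extra edge joining A and B. Then G_{C,c} is a phylogenetic tree whose leaves are exactly the singletons {i} for i ∈ N. -/

import Mathlib

open Set

/-- A phylogenetic set of cuts of `α`, where a cut `(A | Aᶜ)` is represented by the
cluster `A`: every cluster and its complement have cardinality at least 2, the set of
clusters is closed under complement (cuts are unordered), and axiom (C) holds: for any
two cuts, at least one of the four pairwise intersections of their sides is empty. -/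
def IsCutSet {α : Type*} (C : Set (Set α)) : Prop :=
  (∀ A ∈ C, 2 ≤ A.ncard ∧ 2 ≤ Aᶜ.ncard ∧ Aᶜ ∈ C) ∧
  ∀ A ∈ C, ∀ B ∈ C, A ∩ B = ∅ ∨ A ∩ Bᶜ = ∅ ∨ Aᶜ ∩ B = ∅ ∨ Aᶜ ∩ Bᶜ = ∅

/-- `VA C X` is the set of all clusters of `C` and singletons of `α` that are
subsets of `X`. -/
def VA {α : Type*} (C : Set (Set α)) (X : Set α) : Set (Set α) :=
  {S | (S ∈ C ∨ ∃ i : α, S = {i}) ∧ S ⊆ X}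

/-- `covIn C X S T` says that `T` covers `S` in the inclusion poset `VA C X`. -/
def covIn {α : Type*} (C : Set (Set α)) (X : Set α) (S T : Set α) : Prop :=
  S ∈ VA C X ∧ T ∈ VA C X ∧ S ⊂ T ∧ ∀ U ∈ VA C X, ¬(S ⊂ U ∧ U ⊂ T)

/-- The cut graph `G_{C,c}` of the cut `c = (A | Aᶜ)`: its vertices are the clusters and
singletons contained in `A` together with those contained in `Aᶜ`; its edges are the
Hasse-diagram edges of the two inclusion posets, plus one extra edge joining `A`
and `Aᶜ`. -/
def cutGraph {α : Type*} (C : Set (Set α)) (A : Set α) :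
    SimpleGraph ↥(VA C A ∪ VA C Aᶜ) where
  Adj S T :=
    covIn C A S.1 T.1 ∨ covIn C A T.1 S.1 ∨
    covIn C Aᶜ S.1 T.1 ∨ covIn C Aᶜ T.1 S.1 ∨
    (S.1 = A ∧ T.1 = Aᶜ ∧ S ≠ T) ∨ (S.1 = Aᶜ ∧ T.1 = A ∧ S ≠ T)
  symm := by
    refine ⟨?_⟩
    rintro S T (h | h | h | h | ⟨h1, h2, h3⟩ | ⟨h1, h2, h3⟩)
    · exact Or.inr (Or.inl h)
    · exact Or.inl h
    · exact Or.inr (Or.inr (Or.inr (Or.inl h)))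
    · exact Or.inr (Or.inr (Or.inl h))
    · exact Or.inr (Or.inr (Or.inr (Or.inr (Or.inr ⟨h2, h1, h3.symm⟩))))
    · exact Or.inr (Or.inr (Or.inr (Or.inr (Or.inl ⟨h2, h1, h3.symm⟩))))
  loopless := by
    refine ⟨?_⟩
    rintro S (h | h | h | h | ⟨_, _, h⟩ | ⟨_, _, h⟩) <;>
      first
        | exact ssubset_irrefl _ h.2.2.1
        | exact h rfl

section Aux
variable {α : Type*} {C : Set (Set α)} {A X : Set α}

lemma VA_nonempty (hC : IsCutSet C) {S : Set α} (hS : S ∈ VA C X) : S.Nonempty := by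
  rcases hS.1 with h | ⟨i, rfl⟩
  · have := (hC.1 S h).1
    exact Set.nonempty_of_ncard_ne_zero (by omega)
  · exact ⟨i, rfl⟩

lemma VA_laminar (hC : IsCutSet C) (hXc : Xᶜ.Nonempty) {S T : Set α}
    (hS : S ∈ VA C X) (hT : T ∈ VA C X) : S ∩ T = ∅ ∨ S ⊆ T ∨ T ⊆ S := by
  rcases hS.1 with hSC | ⟨i, rfl⟩
  · rcases hT.1 with hTC | ⟨i, rfl⟩
    · rcases hC.2 S hSC T hTC with h | h | h | h
      · exact Or.inl h
      · exact Or.inr (Or.inl (Set.diff_eq_empty.mp (by rw [Set.diff_eq]; exact h)))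
      · exact Or.inr (Or.inr (Set.diff_eq_empty.mp (by rw [Set.diff_eq, Set.inter_comm]; exact h)))
      · exfalso
        obtain ⟨a, ha⟩ := hXc
        have : a ∈ Sᶜ ∩ Tᶜ := ⟨fun h' => ha (hS.2 h'), fun h' => ha (hT.2 h')⟩
        rw [h] at this
        exact this
    · by_cases h : i ∈ S
      · exact Or.inr (Or.inr (Set.singleton_subset_iff.mpr h))
      · exact Or.inl (by rw [Set.inter_singleton_eq_empty]; exact h)
  · by_cases h : i ∈ T
    · exact Or.inr (Or.inl (Set.singleton_subset_iff.mpr h))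
    · exact Or.inl (by rw [Set.singleton_inter_eq_empty]; exact h)

lemma VA_sides_disjoint (hC : IsCutSet C) {S : Set α} (h1 : S ∈ VA C A) (h2 : S ∈ VA C Aᶜ) :
    False := by
  obtain ⟨a, ha⟩ := VA_nonempty hC h1
  exact h2.2 ha (h1.2 ha)

lemma exists_parent [Finite α] (hX : X ∈ VA C X) {S : Set α}
    (hS : S ∈ VA C X) (hne : S ≠ X) : ∃ T, covIn C X S T := by
  obtain ⟨T, hT, hmin⟩ := Set.Finite.exists_minimalFor id {T | T ∈ VA C X ∧ S ⊂ T}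
    (Set.toFinite _) ⟨X, hX, ssubset_of_subset_of_ne hS.2 hne⟩
  exact ⟨T, hS, hT.1, hT.2, fun U hU h => h.2.not_subset (hmin ⟨hU, h.1⟩ h.2.subset)⟩

lemma parent_unique (hC : IsCutSet C) (hXc : Xᶜ.Nonempty) {S T1 T2 : Set α}
    (h1 : covIn C X S T1) (h2 : covIn C X S T2) : T1 = T2 := by
  rcases VA_laminar hC hXc h1.2.1 h2.2.1 with h | h | h
  · exfalso
    obtain ⟨a, ha⟩ := VA_nonempty hC h1.1
    have : a ∈ T1 ∩ T2 := ⟨h1.2.2.1.subset ha, h2.2.2.1.subset ha⟩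
    rw [h] at this; exact this
  · by_contra hne
    exact h2.2.2.2 T1 h1.2.1 ⟨h1.2.2.1, ssubset_of_subset_of_ne h hne⟩
  · by_contra hne
    exact h1.2.2.2 T2 h2.2.1 ⟨h2.2.2.1, ssubset_of_subset_of_ne h (Ne.symm hne)⟩

lemma exists_child [Finite α] {S : Set α} (hS : S ∈ VA C X) {i : α}
    (hi : i ∈ S) (hne : ({i} : Set α) ≠ S) : ∃ T, covIn C X T S ∧ i ∈ T := by
  obtain ⟨T, hT, hmax⟩ := Set.Finite.exists_maximalFor id {T | T ∈ VA C X ∧ i ∈ T ∧ T ⊂ S}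
    (Set.toFinite _)
    ⟨{i}, ⟨Or.inr ⟨i, rfl⟩, (Set.singleton_subset_iff.mpr hi).trans hS.2⟩, rfl,
      ssubset_of_subset_of_ne (Set.singleton_subset_iff.mpr hi) hne⟩
  refine ⟨T, ⟨hT.1, hS, hT.2.2, fun U hU h => ?_⟩, hT.2.1⟩
  exact h.1.not_subset (hmax ⟨hU, h.1.subset hT.2.1, h.2⟩ h.1.subset)


/-- Facts bundled about a "side" X. -/
lemma side_facts (hC : IsCutSet C) (hA : A ∈ C) (hX : X = A ∨ X = Aᶜ) :
    X ∈ C ∧ X ∈ VA C X ∧ X.Nonempty ∧ Xᶜ.Nonempty ∧ 2 ≤ X.ncard := by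
  have hAc : Aᶜ ∈ C := (hC.1 A hA).2.2
  have hXC : X ∈ C := by rcases hX with rfl | rfl; exacts [hA, hAc]
  have h2 : 2 ≤ X.ncard := (hC.1 X hXC).1
  have h2c : 2 ≤ Xᶜ.ncard := (hC.1 X hXC).2.1
  exact ⟨hXC, ⟨Or.inl hXC, subset_rfl⟩,
    Set.nonempty_of_ncard_ne_zero (by omega), Set.nonempty_of_ncard_ne_zero (by omega), h2⟩

lemma cutGraph_adj {u w : ↥(VA C A ∪ VA C Aᶜ)} :
    (cutGraph C A).Adj u w ↔
      (covIn C A u.1 w.1 ∨ covIn C A w.1 u.1 ∨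
       covIn C Aᶜ u.1 w.1 ∨ covIn C Aᶜ w.1 u.1 ∨
       (u.1 = A ∧ w.1 = Aᶜ ∧ u ≠ w) ∨ (u.1 = Aᶜ ∧ w.1 = A ∧ u ≠ w)) := Iff.rfl

lemma vert_side (u : ↥(VA C A ∪ VA C Aᶜ)) :
    ∃ X, (X = A ∨ X = Aᶜ) ∧ u.1 ∈ VA C X := by
  rcases u.2 with h | h
  exacts [⟨A, Or.inl rfl, h⟩, ⟨Aᶜ, Or.inr rfl, h⟩]

lemma adj_of_covIn (hX : X = A ∨ X = Aᶜ) {u w : ↥(VA C A ∪ VA C Aᶜ)}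
    (h : covIn C X u.1 w.1) : (cutGraph C A).Adj u w := by
  rw [cutGraph_adj]
  rcases hX with rfl | rfl
  · exact Or.inl h
  · exact Or.inr (Or.inr (Or.inl h))

lemma adj_cases (hC : IsCutSet C) (hA : A ∈ C) (hX : X = A ∨ X = Aᶜ)
    {u w : ↥(VA C A ∪ VA C Aᶜ)} (h : (cutGraph C A).Adj u w) (hu : u.1 ∈ VA C X) :
    covIn C X u.1 w.1 ∨ covIn C X w.1 u.1 ∨ (u.1 = X ∧ w.1 = Xᶜ) := by
  obtain ⟨hAC, hAV, hAne, hAcne, _⟩ := side_facts hC hA (Or.inl rfl)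
  rw [cutGraph_adj] at h
  rcases hX with rfl | rfl
  · rcases h with h | h | h | h | ⟨h1, h2, _⟩ | ⟨h1, h2, _⟩
    · exact Or.inl h
    · exact Or.inr (Or.inl h)
    · exact absurd h.1 (fun h' => VA_sides_disjoint hC hu h')
    · exact absurd h.2.1 (fun h' => VA_sides_disjoint hC hu h')
    · exact Or.inr (Or.inr ⟨h1, h2⟩)
    · exfalso
      obtain ⟨a, ha⟩ := hAcne
      have : a ∈ u.1 := by rw [h1]; exact ha
      exact ha (hu.2 this)
  · rcases h with h | h | h | h | ⟨h1, h2, _⟩ | ⟨h1, h2, _⟩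
    · exact absurd h.1 (fun h' => VA_sides_disjoint hC h' hu)
    · exact absurd h.2.1 (fun h' => VA_sides_disjoint hC h' hu)
    · exact Or.inl h
    · exact Or.inr (Or.inl h)
    · exfalso
      obtain ⟨a, ha⟩ := hAne
      have : a ∈ u.1 := by rw [h1]; exact ha
      exact hu.2 this ha
    · exact Or.inr (Or.inr ⟨h1, by rw [compl_compl]; exact h2⟩)

lemma mk_vert (hX : X = A ∨ X = Aᶜ) {S : Set α} (hS : S ∈ VA C X) :
    S ∈ VA C A ∪ VA C Aᶜ := by
  rcases hX with rfl | rfl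
  exacts [Or.inl hS, Or.inr hS]


lemma reach_root [Finite α] (hC : IsCutSet C) (hA : A ∈ C) (hX : X = A ∨ X = Aᶜ)
    (xv : ↥(VA C A ∪ VA C Aᶜ)) (hxv : xv.1 = X) :
    ∀ n : ℕ, ∀ u : ↥(VA C A ∪ VA C Aᶜ), u.1 ∈ VA C X → X.ncard - u.1.ncard ≤ n →
      (cutGraph C A).Reachable xv u := by
  obtain ⟨hXC, hXV, hXne, hXcne, _⟩ := side_facts hC hA hX
  intro n
  induction n with
  | zero =>
    intro u hu hle
    have he : u.1 = X := Set.eq_of_subset_of_ncard_le hu.2 (by omega) (Set.toFinite X)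
    rw [show u = xv from Subtype.ext (he.trans hxv.symm)]
  | succ n ih =>
    intro u hu hle
    by_cases he : u.1 = X
    · rw [show u = xv from Subtype.ext (he.trans hxv.symm)]
    · obtain ⟨T, hT⟩ := exists_parent hXV hu he
      have hTV : T ∈ VA C X := hT.2.1
      set tv : ↥(VA C A ∪ VA C Aᶜ) := ⟨T, mk_vert hX hTV⟩ with htv
      have hr : (cutGraph C A).Reachable xv tv := by
        refine ih tv hTV (show X.ncard - T.ncard ≤ n from ?_)
        have h1 : u.1.ncard < T.ncard := Set.ncard_lt_ncard hT.2.2.1 (Set.toFinite T)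
        have h2 : T.ncard ≤ X.ncard := Set.ncard_le_ncard hTV.2 (Set.toFinite X)
        omega
      exact hr.trans (adj_of_covIn hX (show covIn C X u.1 tv.1 from hT)).symm.reachable

lemma cut_connected [Finite α] (hC : IsCutSet C) (hA : A ∈ C) :
    (cutGraph C A).Connected := by
  obtain ⟨hAC, hAV, hAne, hAcne, _⟩ := side_facts hC hA (Or.inl rfl)
  obtain ⟨hAcC, hAcV, _, _, _⟩ := side_facts hC hA (Or.inr rfl)
  set av : ↥(VA C A ∪ VA C Aᶜ) := ⟨A, Or.inl hAV⟩ with hav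
  set acv : ↥(VA C A ∪ VA C Aᶜ) := ⟨Aᶜ, Or.inr hAcV⟩ with hacv
  have hAAc : A ≠ Aᶜ := by
    intro h
    obtain ⟨a, ha⟩ := hAne
    exact (h ▸ ha : a ∈ Aᶜ) ha
  have hadj : (cutGraph C A).Adj av acv := by
    rw [cutGraph_adj]
    exact Or.inr (Or.inr (Or.inr (Or.inr (Or.inl ⟨rfl, rfl,
      fun h => hAAc (congrArg Subtype.val h)⟩))))
  have key : ∀ u : ↥(VA C A ∪ VA C Aᶜ), (cutGraph C A).Reachable av u := by
    intro u
    rcases u.2 with hu | hu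
    · exact reach_root hC hA (Or.inl rfl) av rfl _ u hu le_rfl
    · exact hadj.reachable.trans (reach_root hC hA (Or.inr rfl) acv rfl _ u hu le_rfl)
  rw [SimpleGraph.connected_iff]
  exact ⟨fun u v => (key u).symm.trans (key v), ⟨av⟩⟩

lemma walk_cross {V : Type*} {G : SimpleGraph V} (D : Set V) (e : Sym2 V)
    (hcl : ∀ u u' : V, G.Adj u u' → u ∈ D → u' ∉ D → s(u, u') = e)
    {u w : V} (p : G.Walk u w) : u ∈ D → w ∉ D → e ∈ p.edges := by
  induction p with
  | nil => intro hu hw; exact absurd hu hw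
  | @cons a b c h q ih =>
    intro hu hw
    by_cases hb : b ∈ D
    · exact List.mem_cons_of_mem _ (ih hb hw)
    · rw [SimpleGraph.Walk.edges_cons]
      exact (hcl _ _ h hu hb) ▸ List.mem_cons_self

/-- the only edge leaving the down-set of `v` is the parent edge `s(v,w)`. -/
lemma cover_cross [Finite α] (hC : IsCutSet C) (hA : A ∈ C) (hX : X = A ∨ X = Aᶜ)
    {v w : ↥(VA C A ∪ VA C Aᶜ)} (hcov : covIn C X v.1 w.1) :
    ∀ u u' : ↥(VA C A ∪ VA C Aᶜ), (cutGraph C A).Adj u u' →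
      u ∈ {u : ↥(VA C A ∪ VA C Aᶜ) | u.1 ∈ VA C X ∧ u.1 ⊆ v.1} →
      u' ∉ {u : ↥(VA C A ∪ VA C Aᶜ) | u.1 ∈ VA C X ∧ u.1 ⊆ v.1} →
      s(u, u') = s(v, w) := by
  obtain ⟨hXC, hXV, hXne, hXcne, _⟩ := side_facts hC hA hX
  intro u u' hadj hu hu'
  rcases adj_cases hC hA hX hadj hu.1 with h | h | ⟨g1, g2⟩
  · have huv : u.1 = v.1 := by
      by_contra hne
      have husub : u.1 ⊂ v.1 := ssubset_of_subset_of_ne hu.2 hne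
      rcases VA_laminar hC hXcne h.2.1 hcov.1 with hd | hsub | hsub
      · obtain ⟨a, ha⟩ := VA_nonempty hC hu.1
        have : a ∈ u'.1 ∩ v.1 := ⟨h.2.2.1.subset ha, hu.2 ha⟩
        rw [hd] at this; exact this
      · exact hu' ⟨h.2.1, hsub⟩
      · by_cases hveq : v.1 = u'.1
        · exact hu' ⟨h.2.1, hveq ▸ subset_rfl⟩
        · exact h.2.2.2 v.1 hcov.1 ⟨husub, ssubset_of_subset_of_ne hsub hveq⟩
    have h1 : u = v := Subtype.ext huv
    subst h1
    have h2 : u' = w := Subtype.ext (parent_unique hC hXcne h hcov)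
    subst h2
    rfl
  · exact absurd ⟨h.1, h.2.2.1.subset.trans hu.2⟩ hu'
  · exfalso
    have hvX : v.1 = X := subset_antisymm hcov.1.2 (g1 ▸ hu.2)
    have : w.1 ⊆ v.1 := hvX ▸ hcov.2.1.2
    exact hcov.2.2.1.not_subset this

lemma cut_acyclic [Finite α] (hC : IsCutSet C) (hA : A ∈ C) :
    (cutGraph C A).IsAcyclic := by
  rw [SimpleGraph.isAcyclic_iff_forall_edge_isBridge]
  intro e he
  induction e with
  | _ v w =>
    rw [SimpleGraph.mem_edgeSet] at he
    rw [SimpleGraph.isBridge_iff_adj_and_forall_walk_mem_edges]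
    obtain ⟨X, hX, hv⟩ := vert_side v
    obtain ⟨hXC, hXV, hXne, hXcne, _⟩ := side_facts hC hA hX
    rcases adj_cases hC hA hX he hv with hcov | hcov | ⟨h1, h2⟩
    · intro p
      exact walk_cross _ _ (cover_cross hC hA hX hcov) p ⟨hcov.1, subset_rfl⟩
        (fun hw => hcov.2.2.1.not_subset hw.2)
    · intro p
      have key := walk_cross _ _ (cover_cross hC hA hX hcov) p.reverse
        ⟨hcov.1, subset_rfl⟩ (fun hw => hcov.2.2.1.not_subset hw.2)
      rw [SimpleGraph.Walk.edges_reverse, List.mem_reverse] at key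
      rwa [Sym2.eq_swap]
    · intro p
      refine walk_cross {u : ↥(VA C A ∪ VA C Aᶜ) | u.1 ∈ VA C X} s(v, w) ?_ p
        (by simpa [h1] using hXV) ?_
      · intro u u' hadj hu hu'
        rcases adj_cases hC hA hX hadj hu with h | h | ⟨g1, g2⟩
        · exact absurd h.2.1 hu'
        · exact absurd h.1 hu'
        · have e1 : u = v := Subtype.ext (g1.trans h1.symm)
          have e2 : u' = w := Subtype.ext (g2.trans h2.symm)
          rw [e1, e2]
      · intro hw
        obtain ⟨a, ha⟩ := hXcne
        have : a ∈ X := (show w.1 ⊆ X from hw.2) (h2 ▸ ha : a ∈ w.1)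
        exact ha this


lemma singleton_nbhd [Finite α] (hC : IsCutSet C) (hA : A ∈ C)
    {u : ↥(VA C A ∪ VA C Aᶜ)} {i : α} (hi : u.1 = {i}) :
    ∃ w : ↥(VA C A ∪ VA C Aᶜ), (cutGraph C A).neighborSet u = {w} := by
  obtain ⟨X, hX, hu⟩ := vert_side u
  obtain ⟨hXC, hXV, hXne, hXcne, hX2⟩ := side_facts hC hA hX
  have hne : u.1 ≠ X := by
    intro h
    rw [← h, hi, Set.ncard_singleton] at hX2
    omega
  obtain ⟨P, hP⟩ := exists_parent hXV hu hne
  refine ⟨⟨P, mk_vert hX hP.2.1⟩, ?_⟩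
  ext w
  simp only [SimpleGraph.mem_neighborSet, Set.mem_singleton_iff]
  constructor
  · intro hadj
    rcases adj_cases hC hA hX hadj hu with h | h | ⟨g1, g2⟩
    · exact Subtype.ext (parent_unique hC hXcne h hP)
    · exfalso
      have hsub : w.1 ⊆ {i} := hi ▸ h.2.2.1.subset
      have := ((VA_nonempty hC h.1).subset_singleton_iff).mp hsub
      exact h.2.2.1.ne (this.trans hi.symm)
    · exact absurd g1 hne
  · rintro rfl
    exact adj_of_covIn hX hP

lemma cluster_nbhd [Finite α] (hC : IsCutSet C) (hA : A ∈ C)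
    {u : ↥(VA C A ∪ VA C Aᶜ)} (huC : u.1 ∈ C) :
    3 ≤ ((cutGraph C A).neighborSet u).ncard := by
  obtain ⟨X, hX, hu⟩ := vert_side u
  obtain ⟨hXC, hXV, hXne, hXcne, hX2⟩ := side_facts hC hA hX
  have hu2 : 2 ≤ u.1.ncard := (hC.1 _ huC).1
  -- an "upward" neighbor
  obtain ⟨z, hzadj, hzn⟩ : ∃ z : ↥(VA C A ∪ VA C Aᶜ),
      (cutGraph C A).Adj u z ∧ ¬ z.1 ⊆ u.1 := by
    by_cases he : u.1 = X
    · have hXcV : Xᶜ ∈ VA C Xᶜ := ⟨Or.inl ((hC.1 X hXC).2.2), subset_rfl⟩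
      have hmem : Xᶜ ∈ VA C A ∪ VA C Aᶜ := by
        rcases hX with rfl | rfl
        · exact Or.inr hXcV
        · exact Or.inl (by rw [compl_compl] at hXcV ⊢; exact hXcV)
      refine ⟨⟨Xᶜ, hmem⟩, ?_, ?_⟩
      · rw [cutGraph_adj]
        have hne : u ≠ ⟨Xᶜ, hmem⟩ := by
          intro h
          have : u.1 = Xᶜ := congrArg Subtype.val h
          obtain ⟨a, ha⟩ := hXne
          have := (this ▸ (he ▸ ha : a ∈ u.1) : a ∈ Xᶜ)
          exact this (by exact ha)
        rcases hX with rfl | rfl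
        · exact Or.inr (Or.inr (Or.inr (Or.inr (Or.inl ⟨he, rfl, hne⟩))))
        · exact Or.inr (Or.inr (Or.inr (Or.inr (Or.inr ⟨he, compl_compl A, hne⟩))))
      · intro hsub
        obtain ⟨a, ha⟩ := hXcne
        exact ha (he ▸ hu.2 (hsub ha))
    · obtain ⟨P, hP⟩ := exists_parent hXV hu he
      exact ⟨⟨P, mk_vert hX hP.2.1⟩, adj_of_covIn hX hP, hP.2.2.1.not_subset⟩
  -- two distinct children
  obtain ⟨i, hi⟩ := VA_nonempty hC hu
  have hine : ({i} : Set α) ≠ u.1 := by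
    intro h
    rw [← h, Set.ncard_singleton] at hu2
    omega
  obtain ⟨T1, hT1, hiT1⟩ := exists_child hu hi hine
  obtain ⟨k, hk, hkT1⟩ := Set.exists_of_ssubset hT1.2.2.1
  have hkne : ({k} : Set α) ≠ u.1 := by
    intro h
    rw [← h, Set.ncard_singleton] at hu2
    omega
  obtain ⟨T2, hT2, hkT2⟩ := exists_child hu hk hkne
  set t1 : ↥(VA C A ∪ VA C Aᶜ) := ⟨T1, mk_vert hX hT1.1⟩ with ht1
  set t2 : ↥(VA C A ∪ VA C Aᶜ) := ⟨T2, mk_vert hX hT2.1⟩ with ht2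
  have hadj1 : (cutGraph C A).Adj u t1 := (adj_of_covIn hX (show covIn C X t1.1 u.1 from hT1)).symm
  have hadj2 : (cutGraph C A).Adj u t2 := (adj_of_covIn hX (show covIn C X t2.1 u.1 from hT2)).symm
  have h12 : t1 ≠ t2 := by
    intro h
    have h' : T1 = T2 := congrArg Subtype.val h
    rw [h'] at hkT1
    exact hkT1 hkT2
  have hz1 : z ≠ t1 := by
    intro h
    exact hzn (h ▸ hT1.2.2.1.subset : z.1 ⊆ u.1)
  have hz2 : z ≠ t2 := by
    intro h
    exact hzn (h ▸ hT2.2.2.1.subset : z.1 ⊆ u.1)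
  have hsub : {z, t1, t2} ⊆ (cutGraph C A).neighborSet u := by
    rintro x (rfl | rfl | rfl)
    exacts [hzadj, hadj1, hadj2]
  have h3 : ({z, t1, t2} : Set ↥(VA C A ∪ VA C Aᶜ)).ncard = 3 := by
    rw [Set.ncard_insert_of_notMem (by simp [hz1, hz2]) (Set.toFinite _),
      Set.ncard_pair h12]
  rw [← h3]
  exact Set.ncard_le_ncard hsub (Set.toFinite _)

end Aux

/-- for a phylogenetic set of cuts `C` and a cut `c = (A | Aᶜ) ∈ C`, the
cut graph `G_{C,c}` is a phylogenetic tree whose leaves are exactly the singletons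
`{i}` for `i ∈ α`. -/
theorem stmt10 {α : Type*} [Fintype α] (hcard : 3 ≤ Fintype.card α)
    (C : Set (Set α)) (hC : IsCutSet C) (A : Set α) (hA : A ∈ C) :
    (cutGraph C A).IsTree ∧
    (∀ S : ↥(VA C A ∪ VA C Aᶜ), (((cutGraph C A).neighborSet S).ncard ≠ 2)) ∧
    ∀ S : ↥(VA C A ∪ VA C Aᶜ),
      ((cutGraph C A).neighborSet S).ncard = 1 ↔ ∃ i : α, S.1 = {i} := by
  refine ⟨⟨cut_connected hC hA, cut_acyclic hC hA⟩, ?_, ?_⟩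
  · intro S
    have hS : S.1 ∈ C ∨ ∃ i : α, S.1 = {i} := by rcases S.2 with h | h; exacts [h.1, h.1]
    rcases hS with h | ⟨i, hi⟩
    · have := cluster_nbhd hC hA h
      omega
    · obtain ⟨w, hw⟩ := singleton_nbhd hC hA hi
      rw [hw, Set.ncard_singleton]
      omega
  · intro S
    constructor
    · intro h1
      have hS : S.1 ∈ C ∨ ∃ i : α, S.1 = {i} := by rcases S.2 with h | h; exacts [h.1, h.1]
      rcases hS with h | h
      · have := cluster_nbhd hC hA h
        omega
      · exact h
    · rintro ⟨i, hi⟩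
      obtain ⟨w, hw⟩ := singleton_nbhd hC hA hi
      rw [hw, Set.ncard_singleton]
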